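/- For every n ≥ 4, the normalizer in SU(2) of the generalized quaternion group Q_{2^n} equals Q_{2^{n+1}}. -/

import Mathlib

open Matrix Complex

noncomputable section

abbrev SU2 := Matrix.specialUnitaryGroup (Fin 2) ℂ

instance SU2.instGroup : Group SU2 :=
  { (inferInstance : Monoid SU2) with
    inv := fun A => ⟨star A.1, by
      rcases A.2 with ⟨hu, hd⟩
      refine ⟨⟨?_, ?_⟩, ?_⟩
      · simpa using hu.2
      · simpa using hu.1
      · show (star A.1).det = 1
        rw [Matrix.star_eq_conjTranspose, Matrix.det_conjTranspose]
        simp [show A.1.det = 1 from hd]⟩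
    inv_mul_cancel := fun A => Subtype.ext A.2.1.1 }

lemma w_mem : !![(0:ℂ), -1; 1, 0] ∈ Matrix.specialUnitaryGroup (Fin 2) ℂ := by
  rw [Matrix.mem_specialUnitaryGroup_iff, Matrix.mem_unitaryGroup_iff]
  constructor
  · ext i j
    fin_cases i <;> fin_cases j <;>
      simp [Matrix.mul_apply, Fin.sum_univ_two, Matrix.star_apply, Complex.star_def]
  · simp [Matrix.det_fin_two]

def w : SU2 := ⟨!![(0:ℂ), -1; 1, 0], w_mem⟩

lemma xi_conj (m : ℕ) : (starRingEnd ℂ) (2 * Real.pi * Complex.I / m) =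
    -(2 * Real.pi * Complex.I / m) := by
  simp [map_div₀, Complex.conj_I, Complex.conj_ofReal, map_ofNat]
  ring

lemma xi_conj_exp (m : ℕ) : (starRingEnd ℂ) (Complex.exp (2 * Real.pi * Complex.I / m)) =
    Complex.exp (-(2 * Real.pi * Complex.I / m)) := by
  rw [← Complex.exp_conj, xi_conj]

lemma xi_conj_exp' (m : ℕ) : (starRingEnd ℂ) (Complex.exp (-(2 * Real.pi * Complex.I / m))) =
    Complex.exp (2 * Real.pi * Complex.I / m) := by
  rw [← Complex.exp_conj, map_neg, xi_conj, neg_neg]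

lemma xi_mem (m : ℕ) :
    !![Complex.exp (2 * Real.pi * Complex.I / m), 0; 0,
       Complex.exp (-(2 * Real.pi * Complex.I / m))]
      ∈ Matrix.specialUnitaryGroup (Fin 2) ℂ := by
  rw [Matrix.mem_specialUnitaryGroup_iff, Matrix.mem_unitaryGroup_iff]
  have hstar : star (!![Complex.exp (2 * Real.pi * Complex.I / m), 0; 0,
       Complex.exp (-(2 * Real.pi * Complex.I / m))]) =
      !![Complex.exp (-(2 * Real.pi * Complex.I / m)), 0; 0,
       Complex.exp (2 * Real.pi * Complex.I / m)] := by
    ext i j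
    fin_cases i <;> fin_cases j <;>
      simp [Matrix.star_apply, Complex.star_def, xi_conj_exp m, xi_conj_exp' m]
  constructor
  · rw [hstar]
    ext i j
    fin_cases i <;> fin_cases j <;>
      simp [Matrix.mul_apply, Fin.sum_univ_two, ← Complex.exp_add]
  · simp [Matrix.det_fin_two, ← Complex.exp_add]

def ξ (m : ℕ) : SU2 :=
  ⟨!![Complex.exp (2 * Real.pi * Complex.I / m), 0; 0,
      Complex.exp (-(2 * Real.pi * Complex.I / m))], xi_mem m⟩

/-- `μ m` : the cyclic subgroup of `SU2` generated by `ξ m`. -/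
def μ (m : ℕ) : Subgroup SU2 := Subgroup.zpowers (ξ m)

/-- `genQ q` is the generalized quaternion group `Q_{2^{q+1}} ⊆ SU2`,
generated by `ξ_{2^q}` and `w`. -/
def genQ (q : ℕ) : Subgroup SU2 := Subgroup.closure {ξ (2 ^ q), w}

/-- Lower central series of a subgroup, as subgroups of the ambient group:
`lcs H k = Γ^{k+1}(H)`, so `lcs H 0 = Γ¹(H) = H` and `lcs H (k+1) = ⁅lcs H k, H⁆`. -/
def lcs {G : Type*} [Group G] (H : Subgroup G) : ℕ → Subgroup G
  | 0 => H
  | (k + 1) => ⁅lcs H k, H⁆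

/-- The set of diagonal matrices in `SU2`: the maximal torus `T`. -/
def Tset : Set SU2 :=
  {x | (x : Matrix (Fin 2) (Fin 2) ℂ) 0 1 = 0 ∧ (x : Matrix (Fin 2) (Fin 2) ℂ) 1 0 = 0}

/-- The set of anti-diagonal matrices in `SU2`: the coset `wT`. -/
def wTset : Set SU2 :=
  {x | (x : Matrix (Fin 2) (Fin 2) ℂ) 0 0 = 0 ∧ (x : Matrix (Fin 2) (Fin 2) ℂ) 1 1 = 0}

/-- `PU(2)`, the quotient of `SU(2)` by its center `{±I}`. -/
abbrev PU2 := SU2 ⧸ Subgroup.center SU2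


/-- the basic root of unity `exp(2πi/m)` -/
def B (m : ℕ) : ℂ := Complex.exp (2 * Real.pi * Complex.I / m)

/-- `E m k = exp(2πik/m)` -/
def E (m : ℕ) (k : ℤ) : ℂ := B m ^ k

lemma B_ne_zero (m : ℕ) : B m ≠ 0 := Complex.exp_ne_zero _

lemma E_def (m : ℕ) (k : ℤ) : E m k = Complex.exp (k * (2 * Real.pi * Complex.I / m)) := by
  rw [Complex.exp_int_mul]; rfl

lemma E_add (m : ℕ) (k l : ℤ) : E m k * E m l = E m (k + l) :=
  (zpow_add₀ (B_ne_zero m) k l).symm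

lemma E_neg (m : ℕ) (k : ℤ) : E m (-k) = (E m k)⁻¹ := zpow_neg _ _

lemma E_ne_zero (m : ℕ) (k : ℤ) : E m k ≠ 0 := zpow_ne_zero _ (B_ne_zero m)

lemma E_conj (m : ℕ) (k : ℤ) : (starRingEnd ℂ) (E m k) = E m (-k) := by
  rw [E_def, ← Complex.exp_conj, _root_.map_mul, xi_conj, E_def]
  congr 1
  rw [map_intCast]
  push_cast
  ring

lemma E_pow (m : ℕ) (k : ℤ) (p : ℕ) : E m k ^ p = E m (k * p) := by
  rw [E, E, ← zpow_natCast, ← _root_.zpow_mul]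

lemma E_eq_one_iff (m : ℕ) (hm : m ≠ 0) (k : ℤ) : E m k = 1 ↔ (m : ℤ) ∣ k :=
  (Complex.isPrimitiveRoot_exp m hm).zpow_eq_one_iff_dvd k

lemma E_eq_pow (m : ℕ) (i : ℕ) : E m i = B m ^ i := by rw [E, zpow_natCast]

lemma xi_coe (m : ℕ) : (ξ m : Matrix (Fin 2) (Fin 2) ℂ) = !![E m 1, 0; 0, E m (-1)] := by
  have h1 : E m 1 = Complex.exp (2 * Real.pi * Complex.I / m) := by
    rw [E_def]; push_cast; rw [one_mul]
  have h2 : E m (-1) = Complex.exp (-(2 * Real.pi * Complex.I / m)) := by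
    rw [E_def]; push_cast; rw [neg_one_mul]
  rw [ξ, h1, h2]

lemma SU2.coe_mul (a b : SU2) : ((a * b : SU2) : Matrix (Fin 2) (Fin 2) ℂ) = (a : Matrix (Fin 2) (Fin 2) ℂ) * b := rfl
lemma SU2.coe_inv (a : SU2) : ((a⁻¹ : SU2) : Matrix (Fin 2) (Fin 2) ℂ) = star (a : Matrix (Fin 2) (Fin 2) ℂ) := rfl
lemma SU2.coe_one : ((1 : SU2) : Matrix (Fin 2) (Fin 2) ℂ) = 1 := rfl

lemma star_diag (a d : ℂ) : star !![a, 0; 0, d] = !![(starRingEnd ℂ) a, 0; 0, (starRingEnd ℂ) d] := by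
  ext i j
  fin_cases i <;> fin_cases j <;> simp [Matrix.star_apply, Complex.star_def]

lemma xi_pow_nat (m : ℕ) (p : ℕ) :
    ((ξ m ^ p : SU2) : Matrix (Fin 2) (Fin 2) ℂ) = !![E m p, 0; 0, E m (-(p : ℤ))] := by
  induction p with
  | zero =>
    simp only [pow_zero, SU2.coe_one, Nat.cast_zero, neg_zero]
    have : E m 0 = 1 := zpow_zero _
    rw [this, Matrix.one_fin_two]
  | succ p ih =>
    rw [pow_succ, SU2.coe_mul, ih, xi_coe, Matrix.mul_fin_two]
    have h1 : E m (p : ℤ) * E m 1 = E m ((p : ℤ) + 1) := E_add m _ _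
    have h2 : E m (-(p : ℤ)) * E m (-1) = E m (-((p : ℤ) + 1)) := by rw [E_add]; ring_nf
    push_cast
    rw [← h1, ← h2]
    ring_nf

lemma xi_zpow (m : ℕ) (k : ℤ) :
    ((ξ m ^ k : SU2) : Matrix (Fin 2) (Fin 2) ℂ) = !![E m k, 0; 0, E m (-k)] := by
  cases k with
  | ofNat p => rw [Int.ofNat_eq_coe, zpow_natCast, xi_pow_nat]
  | negSucc p =>
    rw [zpow_negSucc, SU2.coe_inv, xi_pow_nat, star_diag, E_conj, E_conj]
    rw [Int.negSucc_eq]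
    push_cast
    ring_nf

lemma w_coe : (w : Matrix (Fin 2) (Fin 2) ℂ) = !![0, -1; 1, 0] := rfl

lemma rel_xw (m : ℕ) (k : ℤ) : ξ m ^ k * w = w * ξ m ^ (-k) := by
  apply Subtype.ext
  rw [SU2.coe_mul, SU2.coe_mul, xi_zpow, xi_zpow, w_coe, Matrix.mul_fin_two, Matrix.mul_fin_two]
  ring_nf

lemma E_two_mul (m : ℕ) (hm : m ≠ 0) (k : ℤ) : E (2 * m) (2 * k) = E m k := by
  rw [E_def, E_def]
  congr 1
  have : (m : ℂ) ≠ 0 := Nat.cast_ne_zero.mpr hm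
  push_cast
  field_simp

lemma E_mid (m : ℕ) (hm : m ≠ 0) : E (2 * m) (m : ℤ) = -1 := by
  rw [E_def]
  have hc : (m : ℂ) ≠ 0 := Nat.cast_ne_zero.mpr hm
  have : ((m : ℤ) : ℂ) * (2 * Real.pi * Complex.I / ((2 * m : ℕ) : ℂ)) = Real.pi * Complex.I := by
    push_cast
    field_simp
  rw [this, Complex.exp_pi_mul_I]

lemma pow2_eq (q : ℕ) (hq : 1 ≤ q) : (2 : ℕ) ^ q = 2 * 2 ^ (q - 1) := by
  obtain ⟨r, rfl⟩ := Nat.exists_eq_add_of_le hq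
  simp [pow_succ, pow_add]

lemma E_half (q : ℕ) (hq : 1 ≤ q) : E (2 ^ q) ((2 ^ (q - 1) : ℕ) : ℤ) = -1 := by
  rw [pow2_eq q hq]
  exact E_mid _ (by positivity)

lemma E_double (n : ℕ) (hn : 1 ≤ n) (k : ℤ) : E (2 ^ n) (2 * k) = E (2 ^ (n - 1)) k := by
  rw [pow2_eq n hn]
  exact E_two_mul _ (by positivity) k

lemma rel_ww (q : ℕ) (hq : 1 ≤ q) : w * w = ξ (2 ^ q) ^ ((2 ^ (q - 1) : ℕ) : ℤ) := by
  apply Subtype.ext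
  rw [SU2.coe_mul, xi_zpow, w_coe, Matrix.mul_fin_two, E_half q hq, ← E_conj, E_half q hq]
  norm_num

lemma rel_winv (q : ℕ) (hq : 1 ≤ q) : w⁻¹ = w * ξ (2 ^ q) ^ ((2 ^ (q - 1) : ℕ) : ℤ) := by
  apply Subtype.ext
  rw [SU2.coe_inv, SU2.coe_mul, xi_zpow, w_coe, Matrix.mul_fin_two, E_half q hq, ← E_conj,
    E_half q hq]
  ext i j
  fin_cases i <;> fin_cases j <;> simp [Matrix.star_apply, Complex.star_def]

def Qgroup (q : ℕ) (hq : 1 ≤ q) : Subgroup SU2 where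
  carrier := {x | ∃ k : ℤ, x = ξ (2 ^ q) ^ k ∨ x = w * ξ (2 ^ q) ^ k}
  one_mem' := ⟨0, Or.inl (zpow_zero _).symm⟩
  mul_mem' := by
    rintro x y ⟨k, rfl | rfl⟩ ⟨l, rfl | rfl⟩
    · exact ⟨k + l, Or.inl (by rw [_root_.zpow_add])⟩
    · refine ⟨-k + l, Or.inr ?_⟩
      rw [← mul_assoc, rel_xw, mul_assoc, ← _root_.zpow_add]
    · exact ⟨k + l, Or.inr (by rw [mul_assoc, ← _root_.zpow_add])⟩
    · refine ⟨((2 ^ (q - 1) : ℕ) : ℤ) + (-k + l), Or.inl ?_⟩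
      have h1 : ξ (2 ^ q) ^ k * (w * ξ (2 ^ q) ^ l) = w * ξ (2 ^ q) ^ (-k + l) := by
        rw [← mul_assoc, rel_xw, mul_assoc, ← _root_.zpow_add]
      rw [mul_assoc, h1, ← mul_assoc, rel_ww q hq, ← _root_.zpow_add]
  inv_mem' := by
    rintro x ⟨k, rfl | rfl⟩
    · exact ⟨-k, Or.inl (by rw [_root_.zpow_neg])⟩
    · refine ⟨k + ((2 ^ (q - 1) : ℕ) : ℤ), Or.inr ?_⟩
      rw [_root_.mul_inv_rev, ← _root_.zpow_neg, rel_winv q hq, ← mul_assoc, rel_xw, neg_neg, mul_assoc,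
        ← _root_.zpow_add]

lemma mem_genQ {q : ℕ} (hq : 1 ≤ q) (x : SU2) :
    x ∈ genQ q ↔ ∃ k : ℤ, x = ξ (2 ^ q) ^ k ∨ x = w * ξ (2 ^ q) ^ k := by
  constructor
  · intro hx
    have h : genQ q ≤ Qgroup q hq := by
      rw [genQ, Subgroup.closure_le]
      intro y hy
      simp only [Set.mem_insert_iff, Set.mem_singleton_iff] at hy
      rcases hy with rfl | rfl
      · exact ⟨1, Or.inl (zpow_one _).symm⟩
      · exact ⟨0, Or.inr (by rw [zpow_zero, mul_one])⟩
    exact h hx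
  · have hξ : ξ (2 ^ q) ∈ genQ q := Subgroup.subset_closure (by simp)
    have hw : w ∈ genQ q := Subgroup.subset_closure (by simp)
    rintro ⟨k, rfl | rfl⟩
    · exact Subgroup.zpow_mem _ hξ k
    · exact Subgroup.mul_mem _ hw (Subgroup.zpow_mem _ hξ k)

lemma xi_inv_coe (m : ℕ) : (((ξ m)⁻¹ : SU2) : Matrix (Fin 2) (Fin 2) ℂ) = !![E m (-1), 0; 0, E m 1] := by
  rw [SU2.coe_inv, xi_coe, star_diag, E_conj, E_conj, neg_neg]

lemma conj_w_xi (m : ℕ) (k : ℤ) : w * ξ m ^ k * w⁻¹ = ξ m ^ (-k) := by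
  have h := rel_xw m (-k)
  rw [neg_neg] at h
  rw [← h, mul_assoc, mul_inv_cancel, mul_one]

lemma conj_winv_xi (m : ℕ) (k : ℤ) : w⁻¹ * ξ m ^ k * w = ξ m ^ (-k) := by
  rw [mul_assoc, rel_xw, ← mul_assoc, inv_mul_cancel, one_mul]

lemma xi_commute (a b : ℕ) : ξ a * ξ b = ξ b * ξ a := by
  apply Subtype.ext
  rw [SU2.coe_mul, SU2.coe_mul, xi_coe, xi_coe, Matrix.mul_fin_two, Matrix.mul_fin_two]
  ring_nf

lemma Esq (n : ℕ) (hn : 1 ≤ n) : E (2 ^ n) 1 * E (2 ^ n) 1 = E (2 ^ (n - 1)) 1 := by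
  rw [E_add]
  have := E_double n hn 1
  norm_num at this ⊢
  exact this

lemma Esq' (n : ℕ) (hn : 1 ≤ n) : E (2 ^ n) (-1) * E (2 ^ n) (-1) = E (2 ^ (n - 1)) (-1) := by
  rw [E_add]
  have := E_double n hn (-1)
  norm_num at this ⊢
  exact this

lemma conj_xi_w (n : ℕ) (hn : 1 ≤ n) :
    ξ (2 ^ n) * w * (ξ (2 ^ n))⁻¹ = w * ξ (2 ^ (n - 1)) ^ (-1 : ℤ) := by
  apply Subtype.ext
  rw [SU2.coe_mul, SU2.coe_mul, SU2.coe_mul, xi_inv_coe, xi_coe, w_coe, xi_zpow,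
    Matrix.mul_fin_two, Matrix.mul_fin_two, Matrix.mul_fin_two]
  norm_num [Esq n hn, Esq' n hn]

lemma conj_xi_inv_w (n : ℕ) (hn : 1 ≤ n) :
    (ξ (2 ^ n))⁻¹ * w * ξ (2 ^ n) = w * ξ (2 ^ (n - 1)) ^ (1 : ℤ) := by
  apply Subtype.ext
  rw [SU2.coe_mul, SU2.coe_mul, SU2.coe_mul, xi_inv_coe, xi_coe, w_coe, xi_zpow,
    Matrix.mul_fin_two, Matrix.mul_fin_two, Matrix.mul_fin_two]
  norm_num [Esq n hn, Esq' n hn]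

lemma xi_mem_genQ {q : ℕ} (hq : 1 ≤ q) : ξ (2 ^ q) ∈ genQ q :=
  (mem_genQ hq _).mpr ⟨1, Or.inl (zpow_one _).symm⟩

lemma w_mem_genQ {q : ℕ} (hq : 1 ≤ q) : w ∈ genQ q :=
  (mem_genQ hq _).mpr ⟨0, Or.inr (by rw [zpow_zero, mul_one])⟩

lemma conj_stab {q : ℕ} (hq : 1 ≤ q) (g : SU2) (h1 : g * ξ (2 ^ q) * g⁻¹ ∈ genQ q)
    (h2 : g * w * g⁻¹ ∈ genQ q) : ∀ x ∈ genQ q, g * x * g⁻¹ ∈ genQ q := by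
  intro x hx
  rw [mem_genQ hq] at hx
  have hzp : ∀ k : ℤ, g * ξ (2 ^ q) ^ k * g⁻¹ = (g * ξ (2 ^ q) * g⁻¹) ^ k := by
    intro k
    rw [← MulAut.conj_apply, ← MulAut.conj_apply, map_zpow]
  obtain ⟨k, rfl | rfl⟩ := hx
  · rw [hzp k]
    exact Subgroup.zpow_mem _ h1 k
  · rw [show g * (w * ξ (2 ^ q) ^ k) * g⁻¹ = (g * w * g⁻¹) * (g * ξ (2 ^ q) ^ k * g⁻¹) by group]
    rw [hzp k]
    exact Subgroup.mul_mem _ h2 (Subgroup.zpow_mem _ h1 k)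

lemma mem_normalizer_of {q : ℕ} (hq : 1 ≤ q) (g : SU2)
    (h1 : g * ξ (2 ^ q) * g⁻¹ ∈ genQ q) (h2 : g * w * g⁻¹ ∈ genQ q)
    (h3 : g⁻¹ * ξ (2 ^ q) * g ∈ genQ q) (h4 : g⁻¹ * w * g ∈ genQ q) :
    g ∈ Subgroup.normalizer (genQ q) := by
  rw [Subgroup.mem_normalizer_iff]
  intro x
  constructor
  · exact fun hx => conj_stab hq g h1 h2 x hx
  · intro hx
    have h3' : g⁻¹ * ξ (2 ^ q) * g⁻¹⁻¹ ∈ genQ q := by rwa [inv_inv]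
    have h4' : g⁻¹ * w * g⁻¹⁻¹ ∈ genQ q := by rwa [inv_inv]
    have := conj_stab hq g⁻¹ h3' h4' _ hx
    rwa [show g⁻¹ * (g * x * g⁻¹) * g⁻¹⁻¹ = x by group] at this

lemma genQ_le_normalizer (n : ℕ) (hn : 4 ≤ n) : genQ n ≤ Subgroup.normalizer (genQ (n - 1)) := by
  have hq : 1 ≤ n - 1 := by omega
  have hn1 : 1 ≤ n := by omega
  rw [genQ, Subgroup.closure_le]
  intro y hy
  have hξq := xi_mem_genQ hq
  have hwq := w_mem_genQ hq
  simp only [Set.mem_insert_iff, Set.mem_singleton_iff] at hy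
  rcases hy with rfl | rfl
  · refine mem_normalizer_of hq _ ?_ ?_ ?_ ?_
    · rw [show ξ (2 ^ n) * ξ (2 ^ (n - 1)) * (ξ (2 ^ n))⁻¹ = ξ (2 ^ (n - 1)) by
        rw [xi_commute, mul_assoc, mul_inv_cancel, mul_one]]
      exact hξq
    · rw [conj_xi_w n hn1]
      exact Subgroup.mul_mem _ hwq (Subgroup.zpow_mem _ hξq _)
    · rw [show (ξ (2 ^ n))⁻¹ * ξ (2 ^ (n - 1)) * ξ (2 ^ n) = ξ (2 ^ (n - 1)) by
        rw [mul_assoc, ← xi_commute, ← mul_assoc, inv_mul_cancel, one_mul]]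
      exact hξq
    · rw [conj_xi_inv_w n hn1]
      exact Subgroup.mul_mem _ hwq (Subgroup.zpow_mem _ hξq _)
  · refine mem_normalizer_of hq _ ?_ ?_ ?_ ?_
    · rw [show w * ξ (2 ^ (n - 1)) * w⁻¹ = ξ (2 ^ (n - 1)) ^ (-1 : ℤ) by
        have := conj_w_xi (2 ^ (n - 1)) 1; rwa [zpow_one] at this]
      exact Subgroup.zpow_mem _ hξq _
    · rw [show w * w * w⁻¹ = w by group]
      exact hwq
    · rw [show w⁻¹ * ξ (2 ^ (n - 1)) * w = ξ (2 ^ (n - 1)) ^ (-1 : ℤ) by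
        have := conj_winv_xi (2 ^ (n - 1)) 1; rwa [zpow_one] at this]
      exact Subgroup.zpow_mem _ hξq _
    · rw [show w⁻¹ * w * w = w by group]
      exact hwq

lemma E_one_ne {q : ℕ} (hq : 2 ≤ q) : E (2 ^ q) 1 ≠ E (2 ^ q) (-1) := by
  intro h
  have h2 : E (2 ^ q) 2 = 1 := by
    rw [show (2 : ℤ) = 1 + 1 by norm_num, ← E_add]
    nth_rewrite 2 [h]
    rw [E_add]
    norm_num [E]
  rw [E_eq_one_iff _ (by positivity)] at h2
  have h3 := Int.le_of_dvd (by norm_num) h2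
  have h4 : (2 : ℤ) ^ 2 ≤ 2 ^ q := pow_le_pow_right₀ (by norm_num) hq
  push_cast at h3
  omega

lemma E_two_ne_neg_one {q : ℕ} (hq : 3 ≤ q) : E (2 ^ q) 2 ≠ -1 := by
  intro h
  have h2 : E (2 ^ q) 4 = 1 := by
    rw [show (4 : ℤ) = 2 + 2 by norm_num, ← E_add, h]
    norm_num
  rw [E_eq_one_iff _ (by positivity)] at h2
  have h3 := Int.le_of_dvd (by norm_num) h2
  have h4 : (2 : ℤ) ^ 3 ≤ 2 ^ q := pow_le_pow_right₀ (by norm_num) hq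
  push_cast at h3
  omega

lemma ww_coe : ((w * w : SU2) : Matrix (Fin 2) (Fin 2) ℂ) = -1 := by
  rw [SU2.coe_mul, w_coe, Matrix.mul_fin_two]
  rw [show (-1 : Matrix (Fin 2) (Fin 2) ℂ) = -(!![1,0;0,1]) by rw [← Matrix.one_fin_two]]
  norm_num

lemma conj_ww (g : SU2) : g⁻¹ * (w * w) * g = w * w := by
  apply Subtype.ext
  rw [SU2.coe_mul, SU2.coe_mul, SU2.coe_inv, ww_coe]
  have hg : star (g : Matrix (Fin 2) (Fin 2) ℂ) * g = 1 := g.2.1.1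
  rw [mul_neg_one, neg_mul, hg]

lemma star_fin2 (a b c d : ℂ) :
    star !![a, b; c, d] = !![(starRingEnd ℂ) a, (starRingEnd ℂ) c; (starRingEnd ℂ) b, (starRingEnd ℂ) d] := by
  ext i j
  fin_cases i <;> fin_cases j <;> simp [Matrix.star_apply, Complex.star_def]

lemma pow_from_sq {n : ℕ} (hn : 1 ≤ n) {x : ℂ} {j : ℤ} (h : x ^ 2 = E (2 ^ (n - 1)) j) :
    x ^ (2 ^ n) = 1 := by
  rw [pow2_eq n hn, pow_mul, h, E_pow, E_eq_one_iff _ (by positivity)]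
  push_cast
  exact dvd_mul_left _ _

lemma exists_E {n : ℕ} {x : ℂ} (hx : x ^ (2 ^ n) = 1) : ∃ i : ℤ, x = E (2 ^ n) i := by
  haveI : NeZero (2 ^ n) := ⟨by positivity⟩
  obtain ⟨i, _, hi⟩ := (Complex.isPrimitiveRoot_exp (2 ^ n) (by positivity)).eq_pow_of_pow_eq_one hx
  exact ⟨(i : ℤ), by rw [← hi, E_eq_pow]; rfl⟩

lemma normalizer_le_genQ (n : ℕ) (hn : 4 ≤ n) : Subgroup.normalizer (genQ (n - 1)) ≤ genQ n := by
  have hq1 : 1 ≤ n - 1 := by omega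
  have hq2 : 2 ≤ n - 1 := by omega
  have hq3 : 3 ≤ n - 1 := by omega
  have hn1 : 1 ≤ n := by omega
  intro g hg
  have hξc : g * ξ (2 ^ (n - 1)) * g⁻¹ ∈ genQ (n - 1) :=
    (Subgroup.mem_normalizer_iff.mp hg _).mp (xi_mem_genQ hq1)
  have hwcm : g * w * g⁻¹ ∈ genQ (n - 1) :=
    (Subgroup.mem_normalizer_iff.mp hg _).mp (w_mem_genQ hq1)
  rw [mem_genQ hq1] at hξc hwcm
  obtain ⟨k, hk | hk⟩ := hξc
  swap
  · -- antidiagonal conjugate: contradiction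
    exfalso
    have h1 : (g * ξ (2 ^ (n - 1)) * g⁻¹) * (g * ξ (2 ^ (n - 1)) * g⁻¹) = w * w := by
      rw [hk]
      calc w * ξ (2 ^ (n - 1)) ^ k * (w * ξ (2 ^ (n - 1)) ^ k)
          = w * (ξ (2 ^ (n - 1)) ^ k * w) * ξ (2 ^ (n - 1)) ^ k := by group
        _ = w * (w * ξ (2 ^ (n - 1)) ^ (-k)) * ξ (2 ^ (n - 1)) ^ k := by rw [rel_xw]
        _ = w * w * (ξ (2 ^ (n - 1)) ^ (-k) * ξ (2 ^ (n - 1)) ^ k) := by group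
        _ = w * w := by rw [← _root_.zpow_add]; simp
    have h2 : ξ (2 ^ (n - 1)) * ξ (2 ^ (n - 1)) = w * w := by
      have h3 : ξ (2 ^ (n - 1)) * ξ (2 ^ (n - 1)) =
          g⁻¹ * ((g * ξ (2 ^ (n - 1)) * g⁻¹) * (g * ξ (2 ^ (n - 1)) * g⁻¹)) * g := by group
      rw [h3, h1, conj_ww]
    have h4 : ((ξ (2 ^ (n - 1)) * ξ (2 ^ (n - 1)) : SU2) : Matrix (Fin 2) (Fin 2) ℂ) = -1 := by
      rw [h2, ww_coe]
    rw [SU2.coe_mul, xi_coe, Matrix.mul_fin_two] at h4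
    have h5 := Matrix.ext_iff.mpr h4 0 0
    simp at h5
    refine E_two_ne_neg_one hq3 ?_
    rw [show (2 : ℤ) = 1 + 1 by norm_num, ← E_add]
    exact h5
  · -- diagonal conjugate
    have hmul : g * ξ (2 ^ (n - 1)) = ξ (2 ^ (n - 1)) ^ k * g := by rw [← hk]; group
    have hM : (g : Matrix (Fin 2) (Fin 2) ℂ) * (ξ (2 ^ (n - 1)) : Matrix (Fin 2) (Fin 2) ℂ) =
        ((ξ (2 ^ (n - 1)) ^ k : SU2) : Matrix (Fin 2) (Fin 2) ℂ) * g := by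
      rw [← SU2.coe_mul, ← SU2.coe_mul, hmul]
    set a := (g : Matrix (Fin 2) (Fin 2) ℂ) 0 0 with ha_def
    set b := (g : Matrix (Fin 2) (Fin 2) ℂ) 0 1 with hb_def
    set c := (g : Matrix (Fin 2) (Fin 2) ℂ) 1 0 with hc_def
    set d := (g : Matrix (Fin 2) (Fin 2) ℂ) 1 1 with hd_def
    have heta : (g : Matrix (Fin 2) (Fin 2) ℂ) = !![a, b; c, d] := Matrix.eta_fin_two _
    rw [heta, xi_coe, xi_zpow, Matrix.mul_fin_two, Matrix.mul_fin_two] at hM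
    have e00 := Matrix.ext_iff.mpr hM 0 0
    have e01 := Matrix.ext_iff.mpr hM 0 1
    have e10 := Matrix.ext_iff.mpr hM 1 0
    have e11 := Matrix.ext_iff.mpr hM 1 1
    simp only [Matrix.cons_val', Matrix.cons_val_zero, Matrix.cons_val_one, Matrix.head_cons,
      Matrix.head_fin_const, Matrix.empty_val', Matrix.cons_val_fin_one, mul_zero, zero_mul,
      add_zero, zero_add] at e00 e01 e10 e11
    simp at e00 e01 e10 e11
    have hdet : a * d - b * c = 1 := by
      have h := show (g : Matrix (Fin 2) (Fin 2) ℂ).det = 1 from g.2.2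
      rw [heta, Matrix.det_fin_two_of] at h
      exact h
    have hu : (g : Matrix (Fin 2) (Fin 2) ℂ) * star (g : Matrix (Fin 2) (Fin 2) ℂ) = 1 :=
      g.2.1.2
    rw [heta, star_fin2, Matrix.mul_fin_two] at hu
    have hu00 := Matrix.ext_iff.mpr hu 0 0
    simp only [Matrix.cons_val', Matrix.cons_val_zero, Matrix.cons_val_one, Matrix.head_cons,
      Matrix.head_fin_const, Matrix.empty_val', Matrix.cons_val_fin_one, Matrix.one_apply_eq] at hu00
    simp at hu00
    by_cases ha : a = 0
    · -- g is antidiagonal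
      have hbne : b ≠ 0 := by
        intro hb
        rw [ha, hb] at hdet
        simp at hdet
      have hEk : E (2 ^ (n - 1)) k = E (2 ^ (n - 1)) (-1) := by
        rw [mul_comm (E (2 ^ (n - 1)) k) b] at e01
        exact (mul_left_cancel₀ hbne e01).symm
      have hEmk : E (2 ^ (n - 1)) (-k) = E (2 ^ (n - 1)) 1 := by
        rw [E_neg, hEk, E_neg, inv_inv]
      have hd0 : d = 0 := by
        by_contra hd
        rw [hEmk, mul_comm (E (2 ^ (n - 1)) 1) d] at e11
        exact E_one_ne hq2 (mul_left_cancel₀ hd e11).symm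
      have hbb : b * (starRingEnd ℂ) b = 1 := by
        rw [ha] at hu00
        simpa using hu00
      have hbconj : (starRingEnd ℂ) b = b⁻¹ := eq_inv_of_mul_eq_one_right hbb
      have hbc : b * c = -1 := by
        rw [ha, hd0] at hdet
        linear_combination -hdet
      have hcv : c = -b⁻¹ := by
        field_simp
        linear_combination hbc
      have hcconj : (starRingEnd ℂ) c = -b := by
        rw [hcv, map_neg, map_inv₀, hbconj, inv_inv]
      have hgw : ((g * w * g⁻¹ : SU2) : Matrix (Fin 2) (Fin 2) ℂ) =
          !![0, b * (starRingEnd ℂ) c; -(c * (starRingEnd ℂ) b), 0] := by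
        rw [SU2.coe_mul, SU2.coe_mul, SU2.coe_inv, heta, star_fin2, w_coe,
          Matrix.mul_fin_two, Matrix.mul_fin_two, ha, hd0]
        norm_num
      obtain ⟨j, hj | hj⟩ := hwcm
      · exfalso
        have h6 : (!![0, b * (starRingEnd ℂ) c; -(c * (starRingEnd ℂ) b), 0] :
            Matrix (Fin 2) (Fin 2) ℂ) = !![E (2 ^ (n - 1)) j, 0; 0, E (2 ^ (n - 1)) (-j)] := by
          rw [← hgw, hj, xi_zpow]
        have h7 := Matrix.ext_iff.mpr h6 0 1
        simp at h7
        have hcne : c ≠ 0 := by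
          intro h
          rw [h] at hbc
          simp at hbc
        tauto
      · have h6 : (!![0, b * (starRingEnd ℂ) c; -(c * (starRingEnd ℂ) b), 0] :
            Matrix (Fin 2) (Fin 2) ℂ) =
            !![0, -1; 1, 0] * !![E (2 ^ (n - 1)) j, 0; 0, E (2 ^ (n - 1)) (-j)] := by
          rw [← hgw, hj, SU2.coe_mul, w_coe, xi_zpow]
        rw [Matrix.mul_fin_two] at h6
        have h7 := Matrix.ext_iff.mpr h6 0 1
        simp at h7
        rw [hcconj] at h7
        have hb2 : b ^ 2 = E (2 ^ (n - 1)) (-j) := by linear_combination -h7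
        obtain ⟨i, hbE⟩ := exists_E (pow_from_sq hn1 hb2)
        have hEt : E (2 ^ n) (((2 ^ (n - 1) : ℕ) : ℤ) - i) = -E (2 ^ n) (-i) := by
          rw [sub_eq_add_neg, ← E_add, E_half n hn1]
          ring
        have hEmt : E (2 ^ n) (-(((2 ^ (n - 1) : ℕ) : ℤ) - i)) = -E (2 ^ n) i := by
          rw [neg_sub, sub_eq_add_neg, ← E_add, E_neg, E_half n hn1]
          norm_num
        have hfin : g = w * ξ (2 ^ n) ^ (((2 ^ (n - 1) : ℕ) : ℤ) - i) := by
          apply Subtype.ext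
          rw [SU2.coe_mul, w_coe, xi_zpow, heta, Matrix.mul_fin_two, hEt, hEmt]
          rw [ha, hd0, hcv, hbE]
          norm_num
          rw [← E_neg]
        rw [hfin]
        exact (mem_genQ hn1 _).mpr ⟨_, Or.inr rfl⟩
    · -- g is diagonal
      have hEk : E (2 ^ (n - 1)) k = E (2 ^ (n - 1)) 1 := by
        rw [mul_comm (E (2 ^ (n - 1)) k) a] at e00
        exact (mul_left_cancel₀ ha e00).symm
      have hEmk : E (2 ^ (n - 1)) (-k) = E (2 ^ (n - 1)) (-1) := by
        rw [E_neg, hEk, E_neg]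
      have hb0 : b = 0 := by
        by_contra hb
        rw [hEk, mul_comm (E (2 ^ (n - 1)) 1) b] at e01
        exact E_one_ne hq2 (mul_left_cancel₀ hb e01).symm
      have hc0 : c = 0 := by
        by_contra hc
        rw [hEmk, mul_comm (E (2 ^ (n - 1)) (-1)) c] at e10
        exact E_one_ne hq2 (mul_left_cancel₀ hc e10)
      have had : a * d = 1 := by
        rw [hb0] at hdet
        linear_combination hdet
      have hdv : d = a⁻¹ := eq_inv_of_mul_eq_one_right had
      have haa : a * (starRingEnd ℂ) a = 1 := by
        rw [hb0] at hu00
        simpa using hu00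
      have haconj : (starRingEnd ℂ) a = a⁻¹ := eq_inv_of_mul_eq_one_right haa
      have hdconj : (starRingEnd ℂ) d = a := by
        rw [hdv, map_inv₀, haconj, inv_inv]
      have hgw : ((g * w * g⁻¹ : SU2) : Matrix (Fin 2) (Fin 2) ℂ) =
          !![0, -(a * (starRingEnd ℂ) d); d * (starRingEnd ℂ) a, 0] := by
        rw [SU2.coe_mul, SU2.coe_mul, SU2.coe_inv, heta, star_fin2, w_coe,
          Matrix.mul_fin_two, Matrix.mul_fin_two, hb0, hc0]
        norm_num
      obtain ⟨j, hj | hj⟩ := hwcm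
      · exfalso
        have h6 : (!![0, -(a * (starRingEnd ℂ) d); d * (starRingEnd ℂ) a, 0] :
            Matrix (Fin 2) (Fin 2) ℂ) = !![E (2 ^ (n - 1)) j, 0; 0, E (2 ^ (n - 1)) (-j)] := by
          rw [← hgw, hj, xi_zpow]
        have h7 := Matrix.ext_iff.mpr h6 0 1
        simp at h7
        have hdne : d ≠ 0 := by
          intro h
          rw [h] at had
          simp at had
        tauto
      · have h6 : (!![0, -(a * (starRingEnd ℂ) d); d * (starRingEnd ℂ) a, 0] :
            Matrix (Fin 2) (Fin 2) ℂ) =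
            !![0, -1; 1, 0] * !![E (2 ^ (n - 1)) j, 0; 0, E (2 ^ (n - 1)) (-j)] := by
          rw [← hgw, hj, SU2.coe_mul, w_coe, xi_zpow]
        rw [Matrix.mul_fin_two] at h6
        have h7 := Matrix.ext_iff.mpr h6 0 1
        simp at h7
        rw [hdconj] at h7
        have ha2 : a ^ 2 = E (2 ^ (n - 1)) (-j) := by linear_combination h7
        obtain ⟨i, haE⟩ := exists_E (pow_from_sq hn1 ha2)
        have hfin : g = ξ (2 ^ n) ^ i := by
          apply Subtype.ext
          rw [xi_zpow, heta, hb0, hc0, hdv, haE, E_neg]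
        rw [hfin]
        exact (mem_genQ hn1 _).mpr ⟨i, Or.inl rfl⟩



/-- For `n ≥ 4`, the normalizer of `Q_{2^n}` in `SU(2)` is `Q_{2^{n+1}}`. -/
theorem stmt11 (n : ℕ) (hn : 4 ≤ n) :
    Subgroup.normalizer (genQ (n - 1)) = genQ n := by
  exact le_antisymm (normalizer_le_genQ n hn) (genQ_le_normalizer n hn)

end
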